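/- A finite family F satisfies the Frankl condition if and only if there exists a weight function w : α → ℕ with w(a) > 0 for some a ∈ ⋃F, such that 2·(∑_{A∈F} ∑_{a∈A} w(a)) ≥ (∑_{a∈⋃F} w(a)) · |F|. -/
import Mathlib


variable {α : Type*} [DecidableEq α]

/-- A family is union-closed. -/
def UC (F : Finset (Finset α)) : Prop := ∀ A ∈ F, ∀ B ∈ F, A ∪ B ∈ F

/-- Number of members of `F` containing `a`. -/
def cnt (a : α) (F : Finset (Finset α)) : ℕ := (F.filter (fun A => a ∈ A)).card

/-- Union-ucClosure: all unions of nonempty subfamilies. -/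
def ucClosure (F : Finset (Finset α)) : Finset (Finset α) :=
  (F.powerset.filter (fun G => G.Nonempty)).image (fun G => G.sup id)

/-- FC-family. -/
def IsFC (Fc : Finset (Finset α)) : Prop :=
  ∀ F : Finset (Finset α), UC F → Fc ⊆ F →
    ∃ a ∈ Fc.sup id, 2 * cnt a F ≥ F.card

lemma double_sum_eq (F : Finset (Finset α)) (w : α → ℕ) :
    ∑ A ∈ F, ∑ a ∈ A, w a = ∑ a ∈ F.sup id, w a * cnt a F := by
  have h : ∀ A ∈ F, ∑ a ∈ A, w a = ∑ a ∈ F.sup id, if a ∈ A then w a else 0 := by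
    intro A hA
    rw [Finset.sum_ite_mem]
    congr 1
    exact (Finset.inter_eq_right.mpr (Finset.le_sup (f := id) hA)).symm
  rw [Finset.sum_congr rfl h, Finset.sum_comm]
  refine Finset.sum_congr rfl fun a _ => ?_
  simp only [Finset.sum_ite, Finset.sum_const, smul_eq_mul, Finset.sum_const_zero, add_zero,
    cnt, mul_comm, zero_mul]

theorem frankl_iff_weight (F : Finset (Finset α)) (hne : F.Nonempty) :
    (∃ a ∈ F.sup id, 2 * cnt a F ≥ F.card) ↔
      ∃ w : α → ℕ, (∃ a ∈ F.sup id, 0 < w a) ∧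
        2 * (∑ A ∈ F, ∑ a ∈ A, w a) ≥ (∑ a ∈ F.sup id, w a) * F.card := by
  constructor
  · rintro ⟨a, ha, hcnt⟩
    refine ⟨fun x => if x = a then 1 else 0, ⟨a, ha, by simp⟩, ?_⟩
    have h1 : ∑ A ∈ F, ∑ x ∈ A, (if x = a then 1 else 0) = cnt a F := by
      rw [double_sum_eq]
      simp [Finset.sum_ite_eq', ha]
    have h2 : ∑ x ∈ F.sup id, (if x = a then 1 else 0) = 1 := by
      simp [Finset.sum_ite_eq', ha]
    rw [h1, h2, one_mul]
    exact hcnt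
  · rintro ⟨w, ⟨a, ha, hw⟩, hineq⟩
    by_contra hc
    push_neg at hc
    rw [double_sum_eq] at hineq
    have hlt : ∀ x ∈ F.sup id, 2 * (w x * cnt x F) ≤ w x * (F.card - 1) := by
      intro x hx
      have := hc x hx
      have h2 : 2 * cnt x F ≤ F.card - 1 := by omega
      calc 2 * (w x * cnt x F) = w x * (2 * cnt x F) := by ring
        _ ≤ w x * (F.card - 1) := Nat.mul_le_mul_left _ h2
    have hS : 0 < ∑ x ∈ F.sup id, w x :=
      Finset.sum_pos' (fun _ _ => Nat.zero_le _) ⟨a, ha, hw⟩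
    have hcard : 1 ≤ F.card := Finset.card_pos.mpr hne
    have := calc (∑ x ∈ F.sup id, w x) * F.card
        ≤ 2 * ∑ x ∈ F.sup id, w x * cnt x F := hineq
      _ = ∑ x ∈ F.sup id, 2 * (w x * cnt x F) := by rw [Finset.mul_sum]
      _ ≤ ∑ x ∈ F.sup id, w x * (F.card - 1) := Finset.sum_le_sum hlt
      _ = (∑ x ∈ F.sup id, w x) * (F.card - 1) := by rw [← Finset.sum_mul]
    have hlt2 : (∑ x ∈ F.sup id, w x) * (F.card - 1) < (∑ x ∈ F.sup id, w x) * F.card :=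
      (Nat.mul_lt_mul_left hS).mpr (by omega)
    omega
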